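/- The polynomial ν(x) = (1−x^2)^3 μ(x)^2 − 4·(1229/10000)·x^2·η(x)^3, where η(x) = 10x^6 + 6x^5 − 12x^4 − (11/2)x^3 + (29/8)x^2 + (11/8)x + 9/16 and μ(x) = η(x)η''(x) − (1/2)η'(x)^2, has no real zeros in the interval [0.65, 0.95]. -/

import Mathlib

noncomputable def eta (x : ℝ) : ℝ :=
  10*x^6 + 6*x^5 - 12*x^4 - (11/2)*x^3 + (29/8)*x^2 + (11/8)*x + 9/16

noncomputable def mu (x : ℝ) : ℝ :=
  eta x * deriv (deriv eta) x - (1/2) * (deriv eta x)^2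

noncomputable def nu (x : ℝ) : ℝ :=
  (1 - x^2)^3 * (mu x)^2 - 4 * (1229/10000) * x^2 * (eta x)^3

lemma eta_hasDeriv (x : ℝ) :
    HasDerivAt eta (60*x^5 + 30*x^4 - 48*x^3 - (33/2)*x^2 + (29/4)*x + 11/8) x := by
  have h := (((((((hasDerivAt_pow 6 x).const_mul (10:ℝ)).add
    ((hasDerivAt_pow 5 x).const_mul (6:ℝ))).sub
    ((hasDerivAt_pow 4 x).const_mul (12:ℝ))).sub
    ((hasDerivAt_pow 3 x).const_mul ((11:ℝ)/2))).add
    ((hasDerivAt_pow 2 x).const_mul ((29:ℝ)/8))).add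
    ((hasDerivAt_id' (x := x)).const_mul ((11:ℝ)/8))).add_const ((9:ℝ)/16)
  exact h.congr_deriv (by norm_num; ring)

lemma deriv_eta : deriv eta = fun x => 60*x^5 + 30*x^4 - 48*x^3 - (33/2)*x^2 + (29/4)*x + 11/8 :=
  funext fun x => (eta_hasDeriv x).deriv

lemma deriv_deriv_eta (x : ℝ) :
    deriv (deriv eta) x = 300*x^4 + 120*x^3 - 144*x^2 - 33*x + 29/4 := by
  rw [deriv_eta]
  have h := ((((((hasDerivAt_pow 5 x).const_mul (60:ℝ)).add
    ((hasDerivAt_pow 4 x).const_mul (30:ℝ))).sub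
    ((hasDerivAt_pow 3 x).const_mul (48:ℝ))).sub
    ((hasDerivAt_pow 2 x).const_mul ((33:ℝ)/2))).add
    ((hasDerivAt_id' (x := x)).const_mul ((29:ℝ)/4))).add_const ((11:ℝ)/8)
  have h2 : HasDerivAt (fun x : ℝ => 60*x^5 + 30*x^4 - 48*x^3 - (33/2)*x^2 + (29/4)*x + 11/8)
      (300*x^4 + 120*x^3 - 144*x^2 - 33*x + 29/4) x := by
    exact h.congr_deriv (by norm_num; ring)
  exact h2.deriv

lemma nu_key (x : ℝ) : nu x = 10 +
    ( (17696782550633079483668804149375/666334875701477376) * (x - 0.65)^0 * (0.95 - x)^26 +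
      (2272563637641215378323604341538125/333167437850738688) * (x - 0.65)^1 * (0.95 - x)^25 +
      (120858094553972810886526079880596875/666334875701477376) * (x - 0.65)^2 * (0.95 - x)^24 +
      (195937457777869879941991489902653125/83291859462684672) * (x - 0.65)^3 * (0.95 - x)^23 +
      (6434858327093518038711602250768378125/333167437850738688) * (x - 0.65)^4 * (0.95 - x)^22 +
      (18717452467332901379438628741061428125/166583718925369344) * (x - 0.65)^5 * (0.95 - x)^21 +
      (164291378101572861158931923026906053125/333167437850738688) * (x - 0.65)^6 * (0.95 - x)^20 +
      (141471258178699748962465245028952340625/83291859462684672) * (x - 0.65)^7 * (0.95 - x)^19 +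
      (3142743792040166487036708126772350428125/666334875701477376) * (x - 0.65)^8 * (0.95 - x)^18 +
      (3585426639913324532513766931732445171875/333167437850738688) * (x - 0.65)^9 * (0.95 - x)^17 +
      (13631514840903125737360681146262090965625/666334875701477376) * (x - 0.65)^10 * (0.95 - x)^16 +
      (1362887503604647486660501418367271653125/41645929731342336) * (x - 0.65)^11 * (0.95 - x)^15 +
      (7390563908714744603180233266231760534375/166583718925369344) * (x - 0.65)^12 * (0.95 - x)^14 +
      (4264719468396635341457712315712774796875/83291859462684672) * (x - 0.65)^13 * (0.95 - x)^13 +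
      (8398595247790323537939306725225257384375/166583718925369344) * (x - 0.65)^14 * (0.95 - x)^12 +
      (1763755835972931346819220876072353953125/41645929731342336) * (x - 0.65)^15 * (0.95 - x)^11 +
      (20172592068516568430763588775218620415625/666334875701477376) * (x - 0.65)^16 * (0.95 - x)^10 +
      (6103214446470442961976174934371789371875/333167437850738688) * (x - 0.65)^17 * (0.95 - x)^9 +
      (6199014027935887550406893701471033178125/666334875701477376) * (x - 0.65)^18 * (0.95 - x)^8 +
      (326101445713196455010273188967896440625/83291859462684672) * (x - 0.65)^19 * (0.95 - x)^7 +
      (446686190885944470894208723725781503125/333167437850738688) * (x - 0.65)^20 * (0.95 - x)^6 +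
      (60642647628244810032368274127089828125/166583718925369344) * (x - 0.65)^21 * (0.95 - x)^5 +
      (25158049094011655249150268793399728125/333167437850738688) * (x - 0.65)^22 * (0.95 - x)^4 +
      (943445675705721284598189959915753125/83291859462684672) * (x - 0.65)^23 * (0.95 - x)^3 +
      (751616935814314911434790894819746875/666334875701477376) * (x - 0.65)^24 * (0.95 - x)^2 +
      (21390604059705443852940340731338125/333167437850738688) * (x - 0.65)^25 * (0.95 - x)^1 +
      (975142205377775399469963961519375/666334875701477376) * (x - 0.65)^26 * (0.95 - x)^0 ) := by
  simp only [nu, mu, deriv_deriv_eta]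
  simp only [deriv_eta, eta]
  ring

theorem nu_no_zeros : ∀ x ∈ Set.Icc (0.65 : ℝ) 0.95, nu x ≠ 0 := by
  intro x hx
  obtain ⟨hx1, hx2⟩ := hx
  have ht : (0:ℝ) ≤ x - 0.65 := by linarith
  have hs : (0:ℝ) ≤ 0.95 - x := by linarith
  have hge : (10:ℝ) ≤ nu x := by
    rw [nu_key]
    have h0 : (0:ℝ) ≤ (17696782550633079483668804149375/666334875701477376) * (x - 0.65)^0 * (0.95 - x)^26 := by
      have := pow_nonneg ht 0
      have := pow_nonneg hs 26
      positivity
    have h1 : (0:ℝ) ≤ (2272563637641215378323604341538125/333167437850738688) * (x - 0.65)^1 * (0.95 - x)^25 := by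
      have := pow_nonneg ht 1
      have := pow_nonneg hs 25
      positivity
    have h2 : (0:ℝ) ≤ (120858094553972810886526079880596875/666334875701477376) * (x - 0.65)^2 * (0.95 - x)^24 := by
      have := pow_nonneg ht 2
      have := pow_nonneg hs 24
      positivity
    have h3 : (0:ℝ) ≤ (195937457777869879941991489902653125/83291859462684672) * (x - 0.65)^3 * (0.95 - x)^23 := by
      have := pow_nonneg ht 3
      have := pow_nonneg hs 23
      positivity
    have h4 : (0:ℝ) ≤ (6434858327093518038711602250768378125/333167437850738688) * (x - 0.65)^4 * (0.95 - x)^22 := by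
      have := pow_nonneg ht 4
      have := pow_nonneg hs 22
      positivity
    have h5 : (0:ℝ) ≤ (18717452467332901379438628741061428125/166583718925369344) * (x - 0.65)^5 * (0.95 - x)^21 := by
      have := pow_nonneg ht 5
      have := pow_nonneg hs 21
      positivity
    have h6 : (0:ℝ) ≤ (164291378101572861158931923026906053125/333167437850738688) * (x - 0.65)^6 * (0.95 - x)^20 := by
      have := pow_nonneg ht 6
      have := pow_nonneg hs 20
      positivity
    have h7 : (0:ℝ) ≤ (141471258178699748962465245028952340625/83291859462684672) * (x - 0.65)^7 * (0.95 - x)^19 := by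
      have := pow_nonneg ht 7
      have := pow_nonneg hs 19
      positivity
    have h8 : (0:ℝ) ≤ (3142743792040166487036708126772350428125/666334875701477376) * (x - 0.65)^8 * (0.95 - x)^18 := by
      have := pow_nonneg ht 8
      have := pow_nonneg hs 18
      positivity
    have h9 : (0:ℝ) ≤ (3585426639913324532513766931732445171875/333167437850738688) * (x - 0.65)^9 * (0.95 - x)^17 := by
      have := pow_nonneg ht 9
      have := pow_nonneg hs 17
      positivity
    have h10 : (0:ℝ) ≤ (13631514840903125737360681146262090965625/666334875701477376) * (x - 0.65)^10 * (0.95 - x)^16 := by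
      have := pow_nonneg ht 10
      have := pow_nonneg hs 16
      positivity
    have h11 : (0:ℝ) ≤ (1362887503604647486660501418367271653125/41645929731342336) * (x - 0.65)^11 * (0.95 - x)^15 := by
      have := pow_nonneg ht 11
      have := pow_nonneg hs 15
      positivity
    have h12 : (0:ℝ) ≤ (7390563908714744603180233266231760534375/166583718925369344) * (x - 0.65)^12 * (0.95 - x)^14 := by
      have := pow_nonneg ht 12
      have := pow_nonneg hs 14
      positivity
    have h13 : (0:ℝ) ≤ (4264719468396635341457712315712774796875/83291859462684672) * (x - 0.65)^13 * (0.95 - x)^13 := by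
      have := pow_nonneg ht 13
      have := pow_nonneg hs 13
      positivity
    have h14 : (0:ℝ) ≤ (8398595247790323537939306725225257384375/166583718925369344) * (x - 0.65)^14 * (0.95 - x)^12 := by
      have := pow_nonneg ht 14
      have := pow_nonneg hs 12
      positivity
    have h15 : (0:ℝ) ≤ (1763755835972931346819220876072353953125/41645929731342336) * (x - 0.65)^15 * (0.95 - x)^11 := by
      have := pow_nonneg ht 15
      have := pow_nonneg hs 11
      positivity
    have h16 : (0:ℝ) ≤ (20172592068516568430763588775218620415625/666334875701477376) * (x - 0.65)^16 * (0.95 - x)^10 := by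
      have := pow_nonneg ht 16
      have := pow_nonneg hs 10
      positivity
    have h17 : (0:ℝ) ≤ (6103214446470442961976174934371789371875/333167437850738688) * (x - 0.65)^17 * (0.95 - x)^9 := by
      have := pow_nonneg ht 17
      have := pow_nonneg hs 9
      positivity
    have h18 : (0:ℝ) ≤ (6199014027935887550406893701471033178125/666334875701477376) * (x - 0.65)^18 * (0.95 - x)^8 := by
      have := pow_nonneg ht 18
      have := pow_nonneg hs 8
      positivity
    have h19 : (0:ℝ) ≤ (326101445713196455010273188967896440625/83291859462684672) * (x - 0.65)^19 * (0.95 - x)^7 := by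
      have := pow_nonneg ht 19
      have := pow_nonneg hs 7
      positivity
    have h20 : (0:ℝ) ≤ (446686190885944470894208723725781503125/333167437850738688) * (x - 0.65)^20 * (0.95 - x)^6 := by
      have := pow_nonneg ht 20
      have := pow_nonneg hs 6
      positivity
    have h21 : (0:ℝ) ≤ (60642647628244810032368274127089828125/166583718925369344) * (x - 0.65)^21 * (0.95 - x)^5 := by
      have := pow_nonneg ht 21
      have := pow_nonneg hs 5
      positivity
    have h22 : (0:ℝ) ≤ (25158049094011655249150268793399728125/333167437850738688) * (x - 0.65)^22 * (0.95 - x)^4 := by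
      have := pow_nonneg ht 22
      have := pow_nonneg hs 4
      positivity
    have h23 : (0:ℝ) ≤ (943445675705721284598189959915753125/83291859462684672) * (x - 0.65)^23 * (0.95 - x)^3 := by
      have := pow_nonneg ht 23
      have := pow_nonneg hs 3
      positivity
    have h24 : (0:ℝ) ≤ (751616935814314911434790894819746875/666334875701477376) * (x - 0.65)^24 * (0.95 - x)^2 := by
      have := pow_nonneg ht 24
      have := pow_nonneg hs 2
      positivity
    have h25 : (0:ℝ) ≤ (21390604059705443852940340731338125/333167437850738688) * (x - 0.65)^25 * (0.95 - x)^1 := by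
      have := pow_nonneg ht 25
      have := pow_nonneg hs 1
      positivity
    have h26 : (0:ℝ) ≤ (975142205377775399469963961519375/666334875701477376) * (x - 0.65)^26 * (0.95 - x)^0 := by
      have := pow_nonneg ht 26
      have := pow_nonneg hs 0
      positivity
    linarith
  intro hc
  rw [hc] at hge
  norm_num at hge
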